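/- Let M = (M_k) and L = (L_k) be positive sequences, and define (M∘L)_k := max{ M_j L_{α_1} ⋯ L_{α_j} : j ≥ 1, α_i ∈ ℕ_{>0}, α_1 + ⋯ + α_j = k }. If the coefficients of formal power series f and g (with g having zero constant term) satisfy |f_j| ≤ C_f ρ_f^j j! M_j and |g_α| ≤ C_g ρ_g^α α! L_α for all j, α ≥ 1, then the formal composite h = f∘g satisfies |h_k| ≤ D τ^k k! (M∘L)_k for all k ≥ 1, where τ = ρ_g(1 + ρ_f C_g) and D = ρ_f C_f C_g/(1 + ρ_f C_g). -/

import Mathlib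

open Finset

/-- The set of compositions of `k` into `j` positive parts (encoded with values
in `Fin (k+1)`). -/
def compositionsF (j k : ℕ) : Finset (Fin j → Fin (k + 1)) :=
  Finset.univ.filter (fun α => (∀ i, 1 ≤ (α i : ℕ)) ∧ (∑ i, (α i : ℕ)) = k)


def psum {j k : ℕ} (α : Fin j → Fin (k+1)) (i : Fin j) : ℕ :=
  ∑ t ∈ Finset.univ.filter (fun t => t ≤ i), (α t : ℕ)

lemma psum_strictMono {j k : ℕ} (α : Fin j → Fin (k+1)) (hpos : ∀ i, 1 ≤ (α i : ℕ)) :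
    StrictMono (psum α) := by
  intro a b hab
  apply Finset.sum_lt_sum_of_subset (i := b)
  · intro t ht
    simp only [mem_filter, mem_univ, true_and] at *
    exact ht.trans hab.le
  · simp
  · simp [not_le.mpr hab]
  · exact hpos b
  · intro t _ _; exact Nat.zero_le _

lemma psum_last {j' k : ℕ} (α : Fin (j'+1) → Fin (k+1)) (hsum : (∑ i, (α i : ℕ)) = k) :
    psum α (Fin.last j') = k := by
  unfold psum
  have huniv : Finset.univ.filter (fun t : Fin (j'+1) => t ≤ Fin.last j') = Finset.univ := by
    ext t; simp [Fin.le_last]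
  rw [huniv]; exact hsum

lemma psum_split {j k : ℕ} (α : Fin j → Fin (k+1)) (i : Fin j) :
    psum α i = (α i : ℕ) + ∑ t ∈ Finset.univ.filter (fun t => t < i), (α t : ℕ) := by
  unfold psum
  have hins : Finset.univ.filter (fun t : Fin j => t ≤ i) =
      insert i (Finset.univ.filter (fun t => t < i)) := by
    ext t
    simp only [mem_filter, mem_univ, true_and, Finset.mem_insert]
    constructor
    · intro h; rcases eq_or_lt_of_le h with h | h
      · exact Or.inl h
      · exact Or.inr (by simpa using h)
    · rintro (rfl | h)
      · exact le_refl _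
      · exact (by simpa using h : t < i).le
  rw [hins, Finset.sum_insert]
  simp only [mem_filter, mem_univ, true_and]
  exact lt_irrefl i

lemma card_compositionsF (j' k : ℕ) (hk : 1 ≤ k) :
    (compositionsF (j'+1) k).card ≤ (k-1).choose j' := by
  classical
  have hpc := Finset.card_powersetCard j' (Finset.Ioo 0 k)
  rw [Nat.card_Ioo] at hpc
  simp only [Nat.sub_zero] at hpc
  rw [← hpc]
  apply Finset.card_le_card_of_injOn
    (fun α => (Finset.univ.image (psum α)).erase k)
  · intro α hα
    simp only [Finset.mem_coe, compositionsF, mem_filter, mem_univ, true_and] at hα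
    obtain ⟨hpos, hsum⟩ := hα
    have hmono := psum_strictMono α hpos
    have hlastmem : k ∈ Finset.univ.image (psum α) :=
      Finset.mem_image.mpr ⟨Fin.last j', Finset.mem_univ _, psum_last α hsum⟩
    rw [Finset.mem_coe, Finset.mem_powersetCard]
    constructor
    · intro x hx
      obtain ⟨hxk, hx⟩ := Finset.mem_erase.mp hx
      obtain ⟨i, _, rfl⟩ := Finset.mem_image.mp hx
      rw [Finset.mem_Ioo]
      refine ⟨?_, ?_⟩
      · have h1 : 1 ≤ (α i : ℕ) := hpos i
        have h2 : (α i : ℕ) ≤ psum α i := by rw [psum_split]; omega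
        omega
      · have h3 : psum α i ≤ ∑ t, (α t : ℕ) :=
          Finset.sum_le_sum_of_subset (Finset.filter_subset _ _)
        omega
    · rw [Finset.card_erase_of_mem hlastmem,
        Finset.card_image_of_injective _ hmono.injective, Finset.card_univ]
      simp
  · intro α hα β hβ hT
    rw [Finset.mem_coe] at hα hβ
    simp only [compositionsF, mem_filter, mem_univ, true_and] at hα hβ
    dsimp only at hT
    have hka : k ∈ Finset.univ.image (psum α) :=
      Finset.mem_image.mpr ⟨Fin.last j', Finset.mem_univ _, psum_last α hα.2⟩
    have hkb : k ∈ Finset.univ.image (psum β) :=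
      Finset.mem_image.mpr ⟨Fin.last j', Finset.mem_univ _, psum_last β hβ.2⟩
    have himg : Finset.univ.image (psum α) = Finset.univ.image (psum β) := by
      rw [← Finset.insert_erase hka, ← Finset.insert_erase hkb, hT]
    have hcard : (Finset.univ.image (psum α)).card = j' + 1 :=
      (Finset.card_image_of_injective _ (psum_strictMono α hα.1).injective).trans (by simp)
    have hpeq : psum α = psum β := by
      have h1 := Finset.orderEmbOfFin_unique hcard
        (f := psum α) (fun x => Finset.mem_image_of_mem _ (Finset.mem_univ x))
        (psum_strictMono α hα.1)
      have h2 := Finset.orderEmbOfFin_unique hcard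
        (f := psum β) (fun x => himg ▸ Finset.mem_image_of_mem _ (Finset.mem_univ x))
        (psum_strictMono β hβ.1)
      rw [h1, h2]
    funext i
    have hlow : ∑ t ∈ Finset.univ.filter (fun t => t < i), (α t : ℕ) =
        ∑ t ∈ Finset.univ.filter (fun t => t < i), (β t : ℕ) := by
      rcases Nat.eq_zero_or_pos i.val with h0 | h0
      · have he : Finset.univ.filter (fun t => t < i) = (∅ : Finset (Fin (j'+1))) := by
          ext t
          simp only [mem_filter, mem_univ, true_and, Finset.notMem_empty, iff_false,
            Fin.lt_def]
          omega
        simp [he]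
      · have he : Finset.univ.filter (fun t => t < i) =
            Finset.univ.filter (fun t => t ≤ (⟨i.val - 1, by omega⟩ : Fin (j'+1))) := by
          ext t
          simp only [mem_filter, mem_univ, true_and, Fin.lt_def, Fin.le_def]
          omega
        rw [he]
        exact congrFun hpeq _
    have ha := psum_split α i
    have hb := psum_split β i
    have := congrFun hpeq i
    have : (α i : ℕ) = (β i : ℕ) := by omega
    exact Fin.ext this

lemma binom_sum (x : ℝ) (k : ℕ) (hk : 1 ≤ k) :
    ∑ j ∈ Finset.Icc 1 k, x ^ j * ((k-1).choose (j-1) : ℝ) = x * (1 + x) ^ (k-1) := by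
  rw [show Finset.Icc 1 k = Finset.Ico 1 (k+1) by rw [Finset.Ico_add_one_right_eq_Icc],
    Finset.sum_Ico_eq_sum_range]
  have hr : k + 1 - 1 = k := by omega
  rw [hr]
  have : ∀ i ∈ Finset.range k, x ^ (1+i) * ((k-1).choose (1+i-1) : ℝ)
      = x * (x ^ i * ((k-1).choose i : ℝ)) := by
    intro i _
    have : 1 + i - 1 = i := by omega
    rw [this, pow_add, pow_one]; ring
  rw [Finset.sum_congr rfl this, ← Finset.mul_sum]
  congr 1
  have hap := add_pow x 1 (k-1)
  have hrr : k - 1 + 1 = k := by omega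
  rw [hrr] at hap
  rw [add_comm 1 x, hap]
  apply Finset.sum_congr rfl
  intro i _
  simp

/-- Composition of formal power series of Denjoy–Carleman type: if
`|f_j| ≤ C_f ρ_f^j j! M_j` and `|g_α| ≤ C_g ρ_g^α α! L_α` (with `g` having no
constant term), then the Faà di Bruno composite `h` satisfies
`|h_k| ≤ D τ^k k! (M∘L)_k` with `τ = ρ_g (1 + ρ_f C_g)` and
`D = ρ_f C_f C_g / (1 + ρ_f C_g)`. -/
theorem formal_composition_estimate
    (M L : ℕ → ℝ) (hM : ∀ k, 0 < M k) (hL : ∀ k, 0 < L k)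
    (MoL : ℕ → ℝ)
    (hMoL : ∀ k : ℕ, 1 ≤ k → IsGreatest
      {x : ℝ | ∃ j : ℕ, 1 ≤ j ∧ ∃ α : Fin j → ℕ,
        (∀ i, 0 < α i) ∧ (∑ i, α i) = k ∧ x = M j * ∏ i, L (α i)} (MoL k))
    (f g h : ℕ → ℝ)
    (Cf ρf Cg ρg : ℝ) (hCf : 0 < Cf) (hρf : 0 < ρf) (hCg : 0 < Cg) (hρg : 0 < ρg)
    (hf : ∀ j : ℕ, 1 ≤ j → |f j| ≤ Cf * ρf ^ j * (Nat.factorial j) * M j)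
    (hg : ∀ a : ℕ, 1 ≤ a → |g a| ≤ Cg * ρg ^ a * (Nat.factorial a) * L a)
    (hh : ∀ k : ℕ, 1 ≤ k →
      h k / (Nat.factorial k) = ∑ j ∈ Finset.Icc 1 k, (f j / (Nat.factorial j)) *
        ∑ α ∈ compositionsF j k, ∏ i, g ((α i : ℕ)) / (Nat.factorial (α i : ℕ))) :
    ∀ k : ℕ, 1 ≤ k →
      |h k| ≤ (ρf * Cf * Cg / (1 + ρf * Cg)) * (ρg * (1 + ρf * Cg)) ^ k *
        (Nat.factorial k) * MoL k := by
  intro k hk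
  obtain ⟨hMoLmem, hMoLub⟩ := hMoL k hk
  have hMoLpos : 0 < MoL k := by
    obtain ⟨j, hj, α, hpos, hsum, hx⟩ := hMoLmem
    rw [hx]
    exact mul_pos (hM j) (Finset.prod_pos fun i _ => hL _)
  have hfk : (0:ℝ) < (Nat.factorial k : ℝ) := Nat.cast_pos.mpr (Nat.factorial_pos k)
  have hterm : ∀ j ∈ Finset.Icc 1 k,
      |(f j / (Nat.factorial j)) *
        ∑ α ∈ compositionsF j k, ∏ i, g ((α i : ℕ)) / (Nat.factorial (α i : ℕ))|
      ≤ Cf * ρg ^ k * MoL k * ((ρf*Cg) ^ j * (((k-1).choose (j-1) : ℕ) : ℝ)) := by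
    intro j hj
    rw [Finset.mem_Icc] at hj
    have hfj : (0:ℝ) < (Nat.factorial j : ℝ) := Nat.cast_pos.mpr (Nat.factorial_pos j)
    rw [abs_mul, abs_div, abs_of_pos hfj]
    have h1 : |f j| / (Nat.factorial j : ℝ) ≤ Cf * ρf ^ j * M j := by
      rw [div_le_iff₀ hfj]
      calc |f j| ≤ Cf * ρf ^ j * (Nat.factorial j) * M j := hf j hj.1
        _ = Cf * ρf ^ j * M j * (Nat.factorial j) := by ring
    have h2 : |∑ α ∈ compositionsF j k, ∏ i, g ((α i:ℕ)) / (Nat.factorial (α i:ℕ))|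
        ≤ ∑ α ∈ compositionsF j k, Cg ^ j * ρg ^ k * ∏ i, L (α i : ℕ) := by
      refine (Finset.abs_sum_le_sum_abs _ _).trans (Finset.sum_le_sum ?_)
      intro α hα
      simp only [compositionsF, mem_filter, mem_univ, true_and] at hα
      obtain ⟨hpos, hsum⟩ := hα
      rw [Finset.abs_prod]
      calc ∏ i, |g ((α i:ℕ)) / (Nat.factorial (α i:ℕ))|
          ≤ ∏ i, Cg * ρg ^ (α i:ℕ) * L (α i:ℕ) := by
            apply Finset.prod_le_prod (fun i _ => abs_nonneg _)
            intro i _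
            have hfa : (0:ℝ) < (Nat.factorial (α i:ℕ) : ℝ) :=
              Nat.cast_pos.mpr (Nat.factorial_pos _)
            rw [abs_div, abs_of_pos hfa, div_le_iff₀ hfa]
            calc |g (α i:ℕ)| ≤ Cg * ρg ^ (α i:ℕ) * (Nat.factorial (α i:ℕ)) * L (α i:ℕ) :=
                  hg _ (hpos i)
              _ = Cg * ρg ^ (α i:ℕ) * L (α i:ℕ) * (Nat.factorial (α i:ℕ)) := by ring
        _ = Cg ^ j * ρg ^ k * ∏ i, L (α i:ℕ) := by
            rw [Finset.prod_mul_distrib, Finset.prod_mul_distrib, Finset.prod_const,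
              Finset.prod_pow_eq_pow_sum, hsum, Finset.card_univ, Fintype.card_fin]
    have hSnonneg : (0:ℝ) ≤ |∑ α ∈ compositionsF j k,
        ∏ i, g ((α i:ℕ)) / (Nat.factorial (α i:ℕ))| := abs_nonneg _
    calc |f j| / (Nat.factorial j : ℝ) *
          |∑ α ∈ compositionsF j k, ∏ i, g ((α i:ℕ)) / (Nat.factorial (α i:ℕ))|
        ≤ (Cf * ρf ^ j * M j) * ∑ α ∈ compositionsF j k, Cg ^ j * ρg ^ k * ∏ i, L (α i:ℕ) := by
          exact mul_le_mul h1 h2 hSnonneg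
            (le_of_lt (mul_pos (mul_pos hCf (pow_pos hρf j)) (hM j)))
      _ = Cf * ρf ^ j * Cg ^ j * ρg ^ k *
            (M j * ∑ α ∈ compositionsF j k, ∏ i, L (α i:ℕ)) := by
          rw [← Finset.mul_sum]; ring
      _ = Cf * ρf ^ j * Cg ^ j * ρg ^ k *
            (∑ α ∈ compositionsF j k, M j * ∏ i, L (α i:ℕ)) := by
          rw [Finset.mul_sum]
      _ ≤ Cf * ρf ^ j * Cg ^ j * ρg ^ k * ((compositionsF j k).card * MoL k) := by
          apply mul_le_mul_of_nonneg_left _ (by positivity)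
          have := Finset.sum_le_card_nsmul (compositionsF j k)
            (fun α => M j * ∏ i, L (α i:ℕ)) (MoL k) ?_
          · simpa [nsmul_eq_mul] using this
          · intro α hα
            simp only [compositionsF, mem_filter, mem_univ, true_and] at hα
            exact hMoLub ⟨j, hj.1, fun i => (α i : ℕ), fun i => hα.1 i, hα.2, rfl⟩
      _ ≤ Cf * ρf ^ j * Cg ^ j * ρg ^ k * ((((k-1).choose (j-1) : ℕ) : ℝ) * MoL k) := by
          apply mul_le_mul_of_nonneg_left _ (by positivity)
          apply mul_le_mul_of_nonneg_right _ hMoLpos.le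
          obtain ⟨j', rfl⟩ : ∃ j', j = j' + 1 := ⟨j - 1, by omega⟩
          have := card_compositionsF j' k hk
          simp only [Nat.add_sub_cancel]
          exact_mod_cast this
      _ = Cf * ρg ^ k * MoL k * ((ρf*Cg) ^ j * (((k-1).choose (j-1) : ℕ) : ℝ)) := by
          rw [mul_pow]; ring
  have hstep : |h k / (Nat.factorial k : ℝ)| ≤
      Cf * ρg ^ k * MoL k * ((ρf*Cg) * (1 + ρf*Cg) ^ (k-1)) := by
    rw [hh k hk]
    refine (Finset.abs_sum_le_sum_abs _ _).trans ?_
    refine (Finset.sum_le_sum hterm).trans ?_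
    rw [← Finset.mul_sum, binom_sum _ _ hk]
  have hone : (0:ℝ) < 1 + ρf * Cg := by positivity
  have hkey : (ρf * Cf * Cg / (1 + ρf * Cg)) * (ρg * (1 + ρf * Cg)) ^ k *
      (Nat.factorial k : ℝ) * MoL k
      = (Cf * ρg ^ k * MoL k * ((ρf*Cg) * (1 + ρf*Cg) ^ (k-1))) * (Nat.factorial k : ℝ) := by
    have h2 : (1 + ρf*Cg) ^ k = (1 + ρf*Cg) ^ (k-1) * (1 + ρf*Cg) := by
      rw [← pow_succ]; congr 1; omega
    rw [mul_pow, h2]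
    field_simp
  calc |h k| = |h k / (Nat.factorial k : ℝ)| * (Nat.factorial k : ℝ) := by
        rw [abs_div, abs_of_pos hfk, div_mul_cancel₀ _ (ne_of_gt hfk)]
    _ ≤ (Cf * ρg ^ k * MoL k * ((ρf*Cg) * (1 + ρf*Cg) ^ (k-1))) * (Nat.factorial k : ℝ) :=
        mul_le_mul_of_nonneg_right hstep hfk.le
    _ = _ := hkey.symm
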